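/- arXiv:2009.00296 — 4 statements merged into one kernel-verified Lean document; each statement's English description precedes it below -/
import Mathlib

section
/- Let ν, ω be natural numbers with 0 < ω ≤ ν, let σ : ℝ → ℝ be of class C², let e : [0,∞) → ℝ^ω be of class C¹, and let the constraint functions G^j be as defined in the context. For every τ ∈ [0,∞), every ξ ∈ ℝ^ν and every strictly lower triangular ν×ν real matrix M, the (ν + ν²) × ν real matrix whose (i,j) entry is ∂G^j/∂ξ^i for 0 ≤ i < ν and is the partial derivative of G^j with respect to the (i−ν)-th entry of the vectorization of M for ν ≤ i < ν + ν², has rank ν (i.e., it has full column rank). -/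
/-- The constraint function `G^j(τ, ξ, M)` of the neural network:
`ξ^j − e^j(τ)` for input units (`j < ω`) and `ξ^j − σ(Σ_k m_{jk} ξ^k)`
for the remaining units. -/
noncomputable def G (ν ω : ℕ) (σ : ℝ → ℝ) (e : ℝ → Fin ω → ℝ)
    (τ : ℝ) (ξ : Fin ν → ℝ) (M : Fin ν → Fin ν → ℝ) (j : Fin ν) : ℝ :=
  if h : (j : ℕ) < ω then ξ j - e τ ⟨(j : ℕ), h⟩
  else ξ j - σ (∑ k, M j k * ξ k)

/-- the `(ν + ν²) × ν` Jacobian matrix of the constraints with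
respect to `(ξ, vec M)` (rows indexed by the `ν` components of `ξ` together
with the `ν²` entries of the matrix `M`, columns indexed by the `ν`
constraints) has full column rank `ν`, for every `τ ≥ 0`, `ξ ∈ ℝ^ν` and
strictly lower triangular `M`. -/
theorem jacobian_full_rank
    (ν ω : ℕ) (hω : 0 < ω) (hων : ω ≤ ν)
    (σ : ℝ → ℝ) (hσ : ContDiff ℝ 2 σ)
    (e : ℝ → Fin ω → ℝ) (he : ContDiffOn ℝ 1 e (Set.Ici 0))
    (τ : ℝ) (hτ : 0 ≤ τ) (ξ : Fin ν → ℝ) (M : Fin ν → Fin ν → ℝ)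
    (hM : ∀ i j : Fin ν, i ≤ j → M i j = 0) :
    (Matrix.of (fun (p : Fin ν ⊕ Fin ν × Fin ν) (j : Fin ν) =>
      match p with
      | Sum.inl i =>
          fderiv ℝ (fun ξ' => G ν ω σ e τ ξ' M j) ξ (Pi.single i 1)
      | Sum.inr (a, b) =>
          fderiv ℝ (fun M' => G ν ω σ e τ ξ M' j) M
            (Pi.single a (Pi.single b 1)))).rank = ν := by
  set A : Matrix (Fin ν ⊕ Fin ν × Fin ν) (Fin ν) ℝ :=
    (Matrix.of (fun (p : Fin ν ⊕ Fin ν × Fin ν) (j : Fin ν) =>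
      match p with
      | Sum.inl i =>
          fderiv ℝ (fun ξ' => G ν ω σ e τ ξ' M j) ξ (Pi.single i 1)
      | Sum.inr (a, b) =>
          fderiv ℝ (fun M' => G ν ω σ e τ ξ M' j) M
            (Pi.single a (Pi.single b 1)))) with hA
  -- the top `ν × ν` block
  set B : Matrix (Fin ν) (Fin ν) ℝ :=
    Matrix.of (fun i j =>
      fderiv ℝ (fun ξ' => G ν ω σ e τ ξ' M j) ξ (Pi.single i 1)) with hB
  -- compute the entries of `B` on and below the "diagonal" (j ≤ i)
  have key : ∀ i j : Fin ν, j ≤ i →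
      B i j = if i = j then 1 else 0 := by
    intro i j hji
    have hMji : M j i = 0 := hM j i hji
    by_cases h : (j : ℕ) < ω
    · have hfun : (fun ξ' : Fin ν → ℝ => G ν ω σ e τ ξ' M j)
          = fun ξ' => ξ' j - e τ ⟨(j : ℕ), h⟩ := by
        funext ξ'; simp [G, h]
      have hF : HasFDerivAt (fun ξ' : Fin ν → ℝ => ξ' j - e τ ⟨(j : ℕ), h⟩)
          ((ContinuousLinearMap.proj j : (Fin ν → ℝ) →L[ℝ] ℝ)) ξ :=
        by exact (hasFDerivAt_apply j ξ).sub_const _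
      simp only [hB, Matrix.of_apply, hfun, hF.fderiv]
      simp [ContinuousLinearMap.proj_apply, Pi.single_apply, eq_comm]
    · set L : (Fin ν → ℝ) →L[ℝ] ℝ :=
        ∑ k, (M j k) • (ContinuousLinearMap.proj k) with hL
      have hLapp : ∀ v : Fin ν → ℝ, L v = ∑ k, M j k * v k := by
        intro v
        simp [hL, ContinuousLinearMap.sum_apply, ContinuousLinearMap.proj_apply]
      have hfun : (fun ξ' : Fin ν → ℝ => G ν ω σ e τ ξ' M j)
          = fun ξ' => ξ' j - σ (L ξ') := by
        funext ξ'; simp [G, h, hLapp]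
      have hσd : HasDerivAt σ (deriv σ (L ξ)) (L ξ) :=
        ((hσ.differentiable (by norm_num)) (L ξ)).hasDerivAt
      have h1 : HasFDerivAt (fun ξ' : Fin ν → ℝ => σ (L ξ'))
          (deriv σ (L ξ) • L) ξ := hσd.comp_hasFDerivAt ξ L.hasFDerivAt
      have hF : HasFDerivAt (fun ξ' : Fin ν → ℝ => ξ' j - σ (L ξ'))
          ((ContinuousLinearMap.proj j : (Fin ν → ℝ) →L[ℝ] ℝ) - deriv σ (L ξ) • L) ξ :=
        by exact (hasFDerivAt_apply j ξ).sub h1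
      have hLs : L (Pi.single i 1) = M j i := by
        rw [hLapp]
        simp [Pi.single_apply, Finset.sum_ite_eq', mul_comm]
      simp only [hB, Matrix.of_apply, hfun, hF.fderiv,
        ContinuousLinearMap.sub_apply, ContinuousLinearMap.smul_apply,
        ContinuousLinearMap.proj_apply, hLs, hMji, smul_eq_mul, mul_zero,
        sub_zero]
      simp [Pi.single_apply, eq_comm]
  -- `B` is upper triangular with unit diagonal, hence invertible
  have hBtri : B.BlockTriangular id := by
    intro i j hij
    have := key i j (le_of_lt hij)
    rwa [if_neg (by exact fun hh => absurd hh (by simpa using hij.ne'))] at this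
  have hdet : B.det = 1 := by
    rw [Matrix.det_of_upperTriangular hBtri]
    refine Finset.prod_eq_one fun i _ => ?_
    simpa using key i i le_rfl
  have hBunit : IsUnit B := by
    rw [Matrix.isUnit_iff_isUnit_det, hdet]; exact isUnit_one
  have hBrank : B.rank = ν := by
    rw [Matrix.rank_of_isUnit B hBunit, Fintype.card_fin]
  -- `B` is obtained from `A` by a row-selection matrix, so `rank B ≤ rank A`
  set P : Matrix (Fin ν) (Fin ν ⊕ Fin ν × Fin ν) ℝ :=
    Matrix.of (fun i p => if p = Sum.inl i then (1 : ℝ) else 0) with hP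
  have hPA : P * A = B := by
    ext i j
    rw [Matrix.mul_apply]
    simp only [hP, Matrix.of_apply, ite_mul, one_mul, zero_mul]
    rw [Finset.sum_ite_eq' Finset.univ (Sum.inl i) (fun p => A p j)]
    simp [hA, hB]
  have hle : B.rank ≤ A.rank := by
    rw [← hPA]; exact Matrix.rank_mul_le_right P A
  have hge : A.rank ≤ ν := by
    simpa using A.rank_le_card_width
  omega
end

section
/- Let ν, ω, σ, e and the constraint functions G^j be as defined in the context, and let m_x > 0 and m_W > 0 be real numbers. Fix τ ∈ [0,∞), ξ ∈ ℝ^ν, and a strictly lower triangular ν×ν real matrix W, and define the ν×ν matrix Λ by Λ_{ij} := (1/m_x) Σ_{a=0}^{ν−1} (∂G^i/∂ξ^a)(∂G^j/∂ξ^a) + (1/m_W) Σ_{a,b=0}^{ν−1} (∂G^i/∂m_{ab})(∂G^j/∂m_{ab}), where all partial derivatives are evaluated at (τ, ξ, W). Then Λ is symmetric positive definite; in particular, for every right-hand side r ∈ ℝ^ν the linear system Λ λ = r determining the Lagrange multipliers has a unique solution λ ∈ ℝ^ν. -/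
open Matrix

private lemma quad_sum {α n : Type*} [Fintype α] [Fintype n]
    (v : α → n → ℝ) (x : n → ℝ) :
    ∑ i, ∑ j, x i * ((∑ a, v a i * v a j) * x j)
      = ∑ a, (∑ i, v a i * x i) ^ 2 := by
  have h : ∀ i j : n, x i * ((∑ a, v a i * v a j) * x j)
      = ∑ a, (v a i * x i) * (v a j * x j) := by
    intro i j
    rw [Finset.sum_mul, Finset.mul_sum]
    exact Finset.sum_congr rfl fun a _ => by ring
  simp only [h]
  calc ∑ i, ∑ j, ∑ a, (v a i * x i) * (v a j * x j)
      = ∑ i : n, ∑ a, ∑ j, (v a i * x i) * (v a j * x j) :=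
        Finset.sum_congr rfl fun i _ => Finset.sum_comm
    _ = ∑ a, ∑ i, ∑ j, (v a i * x i) * (v a j * x j) := Finset.sum_comm
    _ = ∑ a, (∑ i, v a i * x i) ^ 2 := by
        refine Finset.sum_congr rfl fun a _ => ?_
        rw [sq, Finset.sum_mul]
        exact Finset.sum_congr rfl fun i _ => by rw [Finset.mul_sum]

private lemma quad_combo {n : Type*} [Fintype n] (c₁ c₂ : ℝ) (S1 S2 : n → n → ℝ)
    (x : n → ℝ) :
    ∑ i, ∑ j, x i * ((c₁ * S1 i j + c₂ * S2 i j) * x j)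
      = c₁ * ∑ i, ∑ j, x i * (S1 i j * x j)
        + c₂ * ∑ i, ∑ j, x i * (S2 i j * x j) := by
  rw [Finset.mul_sum, Finset.mul_sum, ← Finset.sum_add_distrib]
  refine Finset.sum_congr rfl fun i _ => ?_
  rw [Finset.mul_sum, Finset.mul_sum, ← Finset.sum_add_distrib]
  exact Finset.sum_congr rfl fun j _ => by ring

/-- the matrix
`Λ_{ij} = (1/m_x) Σ_a G^i_{ξ^a} G^j_{ξ^a} + (1/m_W) Σ_{a,b} G^i_{m_{ab}} G^j_{m_{ab}}`
of the linear system for the Lagrange multipliers is symmetric positive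
definite; in particular `Λ λ = r` has a unique solution for every `r`. -/
theorem multiplier_system_posdef
    (ν ω : ℕ) (hω : 0 < ω) (hων : ω ≤ ν)
    (σ : ℝ → ℝ) (hσ : ContDiff ℝ 2 σ)
    (e : ℝ → Fin ω → ℝ) (he : ContDiffOn ℝ 1 e (Set.Ici 0))
    (m_x m_W : ℝ) (hmx : 0 < m_x) (hmW : 0 < m_W)
    (τ : ℝ) (hτ : 0 ≤ τ) (ξ : Fin ν → ℝ) (W : Fin ν → Fin ν → ℝ)
    (hW : ∀ i j : Fin ν, i ≤ j → W i j = 0) :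
    let Gxi : Fin ν → Fin ν → ℝ := fun a i =>
      fderiv ℝ (fun ξ' => G ν ω σ e τ ξ' W i) ξ (Pi.single a 1)
    let GM : Fin ν → Fin ν → Fin ν → ℝ := fun a b i =>
      fderiv ℝ (fun M' => G ν ω σ e τ ξ M' i) W (Pi.single a (Pi.single b 1))
    let Λ : Matrix (Fin ν) (Fin ν) ℝ := Matrix.of fun i j =>
      (1 / m_x) * ∑ a, Gxi a i * Gxi a j
        + (1 / m_W) * ∑ a, ∑ b, GM a b i * GM a b j
    Λ.IsSymm ∧ Λ.PosDef ∧ ∀ r : Fin ν → ℝ, ∃! l : Fin ν → ℝ, Λ.mulVec l = r := by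
  intro Gxi GM Λ
  have hσd : Differentiable ℝ σ := hσ.differentiable two_ne_zero
  set s : Fin ν → ℝ := fun i => ∑ k, W i k * ξ k with hs
  -- the projections are differentiable
  have hproj : ∀ i : Fin ν, HasFDerivAt (fun ξ' : Fin ν → ℝ => ξ' i)
      (ContinuousLinearMap.proj i : (Fin ν → ℝ) →L[ℝ] ℝ) ξ :=
    fun i => (ContinuousLinearMap.proj i : (Fin ν → ℝ) →L[ℝ] ℝ).hasFDerivAt
  -- explicit formula for Gxi
  have hGxi : ∀ a i : Fin ν, Gxi a i =
      (if i = a then (1:ℝ) else 0)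
        - (if (i : ℕ) < ω then 0 else deriv σ (s i) * W i a) := by
    intro a i
    by_cases h : (i : ℕ) < ω
    · have hfun : (fun ξ' : Fin ν → ℝ => G ν ω σ e τ ξ' W i)
          = fun ξ' => ξ' i - e τ ⟨(i : ℕ), h⟩ := by
        funext ξ'; simp [G, h]
      have hF : HasFDerivAt (fun ξ' : Fin ν → ℝ => ξ' i - e τ ⟨(i : ℕ), h⟩)
          (ContinuousLinearMap.proj i : (Fin ν → ℝ) →L[ℝ] ℝ) ξ :=
        (hproj i).sub_const _
      simp only [Gxi, hfun, hF.fderiv, ContinuousLinearMap.proj_apply, h, if_true,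
        Pi.single_apply, sub_zero]
    · have hL : HasFDerivAt (fun ξ' : Fin ν → ℝ => ∑ k, W i k * ξ' k)
          (∑ k, W i k • (ContinuousLinearMap.proj k :
            (Fin ν → ℝ) →L[ℝ] ℝ)) ξ :=
        HasFDerivAt.fun_sum fun k _ => (hproj k).const_mul (W i k)
      have hσ' : HasDerivAt σ (deriv σ (s i)) (∑ k, W i k * ξ k) :=
        (hσd _).hasDerivAt
      have hcomp := hσ'.comp_hasFDerivAt ξ hL
      have hF : HasFDerivAt (fun ξ' : Fin ν → ℝ => ξ' i - σ (∑ k, W i k * ξ' k))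
          ((ContinuousLinearMap.proj i : (Fin ν → ℝ) →L[ℝ] ℝ) - deriv σ (s i) •
            (∑ k, W i k • (ContinuousLinearMap.proj k :
              (Fin ν → ℝ) →L[ℝ] ℝ))) ξ :=
        (hproj i).sub hcomp
      have hfun : (fun ξ' : Fin ν → ℝ => G ν ω σ e τ ξ' W i)
          = fun ξ' => ξ' i - σ (∑ k, W i k * ξ' k) := by
        funext ξ'; simp [G, h]
      simp only [Gxi, hfun, hF.fderiv, ContinuousLinearMap.sub_apply,
        ContinuousLinearMap.smul_apply, ContinuousLinearMap.coe_sum',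
        Finset.sum_apply, ContinuousLinearMap.proj_apply, Pi.single_apply, h, if_false]
      have hone : ∑ k, W i k • (if (k : Fin ν) = a then (1:ℝ) else 0) = W i a := by
        simp [smul_eq_mul, mul_ite, Finset.sum_ite_eq' (Finset.univ : Finset (Fin ν))]
      rw [hone, smul_eq_mul]
  -- the Jacobian matrix of G with respect to ξ
  set A : Matrix (Fin ν) (Fin ν) ℝ := Matrix.of (fun i a => Gxi a i) with hA
  have hAentry : ∀ i a, A i a =
      (if i = a then (1:ℝ) else 0)
        - (if (i : ℕ) < ω then 0 else deriv σ (s i) * W i a) := fun i a => hGxi a i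
  have hAupper : ∀ i a : Fin ν, i < a → A i a = 0 := by
    intro i a hia
    rw [hAentry, hW i a hia.le, if_neg hia.ne]
    simp
  have hAdiag : ∀ i : Fin ν, A i i = 1 := by
    intro i
    rw [hAentry, hW i i le_rfl, if_pos rfl]
    simp
  have hdet : A.det = 1 := by
    rw [Matrix.det_of_lowerTriangular A (fun i j hij => hAupper i j hij)]
    simp [hAdiag]
  have hUnit : IsUnit A := (Matrix.isUnit_iff_isUnit_det A).2 (by rw [hdet]; exact isUnit_one)
  have hinj : Function.Injective A.vecMul := Matrix.vecMul_injective_iff_isUnit.2 hUnit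
  -- symmetry
  have hsymm : Λ.IsSymm := by
    ext i j
    simp only [Matrix.transpose_apply, Λ, Matrix.of_apply]
    congr 1
    · congr 1
      exact Finset.sum_congr rfl fun a _ => mul_comm _ _
    · congr 1
      exact Finset.sum_congr rfl fun a _ =>
        Finset.sum_congr rfl fun b _ => mul_comm _ _
  -- the quadratic form of Λ
  have key : ∀ x : Fin ν → ℝ, star x ⬝ᵥ (Λ *ᵥ x)
      = (1 / m_x) * ∑ a, (∑ i, Gxi a i * x i) ^ 2
        + (1 / m_W) * ∑ p : Fin ν × Fin ν, (∑ i, GM p.1 p.2 i * x i) ^ 2 := by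
    intro x
    calc star x ⬝ᵥ (Λ *ᵥ x)
        = ∑ i, ∑ j, x i * ((1 / m_x * (∑ a, Gxi a i * Gxi a j)
            + 1 / m_W * (∑ p : Fin ν × Fin ν, GM p.1 p.2 i * GM p.1 p.2 j)) * x j) := by
          simp only [star_trivial, dotProduct, Matrix.mulVec, Λ, Matrix.of_apply]
          refine Finset.sum_congr rfl fun i _ => ?_
          rw [Finset.mul_sum]
          refine Finset.sum_congr rfl fun j _ => ?_
          rw [Fintype.sum_prod_type]
      _ = (1 / m_x) * ∑ i, ∑ j, x i * ((∑ a, Gxi a i * Gxi a j) * x j)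
          + (1 / m_W) * ∑ i, ∑ j, x i *
              ((∑ p : Fin ν × Fin ν, GM p.1 p.2 i * GM p.1 p.2 j) * x j) :=
          quad_combo _ _ _ _ x
      _ = (1 / m_x) * ∑ a, (∑ i, Gxi a i * x i) ^ 2
          + (1 / m_W) * ∑ p : Fin ν × Fin ν, (∑ i, GM p.1 p.2 i * x i) ^ 2 := by
          rw [quad_sum (fun a i => Gxi a i) x,
            quad_sum (fun (p : Fin ν × Fin ν) i => GM p.1 p.2 i) x]
  -- positive definiteness
  have hherm : Λ.IsHermitian := by
    rw [Matrix.IsHermitian, Matrix.conjTranspose]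
    ext i j; simpa using congrFun (congrFun hsymm i) j
  have hpos : Λ.PosDef := by
    refine Matrix.posDef_iff_dotProduct_mulVec.2 ⟨hherm, fun x hx => ?_⟩
    rw [key x]
    have hy : Matrix.vecMul x A ≠ 0 := by
      intro h0
      exact hx (hinj (show Matrix.vecMul x A = Matrix.vecMul 0 A by
        rw [Matrix.zero_vecMul]; exact h0))
    obtain ⟨a, ha⟩ := Function.ne_iff.1 hy
    have hva : (∑ i, Gxi a i * x i) = Matrix.vecMul x A a := by
      simp only [Matrix.vecMul, dotProduct, hA, Matrix.of_apply]
      exact Finset.sum_congr rfl fun i _ => mul_comm _ _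
    have hsum1 : 0 < ∑ a, (∑ i, Gxi a i * x i) ^ 2 := by
      refine Finset.sum_pos' (fun b _ => sq_nonneg _) ⟨a, Finset.mem_univ a, ?_⟩
      rw [hva]
      exact sq_pos_of_ne_zero ha
    have hsum2 : 0 ≤ ∑ p : Fin ν × Fin ν, (∑ i, GM p.1 p.2 i * x i) ^ 2 :=
      Finset.sum_nonneg fun p _ => sq_nonneg _
    exact add_pos_of_pos_of_nonneg (mul_pos (by positivity) hsum1)
      (mul_nonneg (by positivity) hsum2)
  have hΛdet : IsUnit Λ.det := (ne_of_gt hpos.det_pos).isUnit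
  refine ⟨hsymm, hpos, fun r => ⟨Λ⁻¹ *ᵥ r, ?_, ?_⟩⟩
  · show Λ *ᵥ (Λ⁻¹ *ᵥ r) = r
    rw [Matrix.mulVec_mulVec, Matrix.mul_nonsing_inv _ hΛdet, Matrix.one_mulVec]
  · intro l hl
    rw [← hl, Matrix.mulVec_mulVec, Matrix.nonsing_inv_mul _ hΛdet, Matrix.one_mulVec]
end

section
/- Let ν, ω, σ, e and the constraint functions G^j be as defined in the context. Fix τ ∈ [0,∞), ξ ∈ ℝ^ν, a strictly lower triangular ν×ν real matrix W, a vector v ∈ ℝ^ν, and let T be the ν×ν matrix with T_{ij} := ∂G^j/∂ξ^i (τ, ξ, W). Then there is a unique δ ∈ ℝ^ν with T δ = −v, and it satisfies the backward recursion δ_i = −v_i + Σ_{j : ω ≤ j < ν} σ'(Σ_k w_{jk} ξ^k) · w_{ji} · δ_j for every i; in particular, if v_i = 0 then δ_i = Σ_{j : ω ≤ j < ν} σ'(Σ_k w_{jk} ξ^k) · w_{ji} · δ_j, and if w_{ji} = 0 for all j (an output unit) then δ_i = −v_i. -/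
/-- with `T_{ij} := ∂G^j/∂ξ^i (τ, ξ, W)`, the system `T δ = −v`
has a unique solution, which satisfies the backward recursion
`δ_i = −v_i + Σ_{ω ≤ j < ν} σ'(Σ_k w_{jk} ξ^k) w_{ji} δ_j`; in particular
`δ_i = Σ_{ω ≤ j < ν} σ'(Σ_k w_{jk} ξ^k) w_{ji} δ_j` when `v_i = 0`, and
`δ_i = −v_i` for output units (those `i` with `w_{ji} = 0` for all `j`). -/
theorem backward_recursion
    (ν ω : ℕ) (hω : 0 < ω) (hων : ω ≤ ν)
    (σ : ℝ → ℝ) (hσ : ContDiff ℝ 2 σ)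
    (e : ℝ → Fin ω → ℝ) (he : ContDiffOn ℝ 1 e (Set.Ici 0))
    (τ : ℝ) (hτ : 0 ≤ τ) (ξ : Fin ν → ℝ) (W : Fin ν → Fin ν → ℝ)
    (hW : ∀ i j : Fin ν, i ≤ j → W i j = 0)
    (v : Fin ν → ℝ) :
    let T : Matrix (Fin ν) (Fin ν) ℝ := Matrix.of fun i j =>
      fderiv ℝ (fun ξ' => G ν ω σ e τ ξ' W j) ξ (Pi.single i 1)
    (∃! δ : Fin ν → ℝ, T.mulVec δ = -v) ∧
    (∀ δ : Fin ν → ℝ, T.mulVec δ = -v →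
      (∀ i, δ i = -v i
          + ∑ j ∈ Finset.univ.filter (fun j : Fin ν => ω ≤ (j : ℕ)),
              deriv σ (∑ k, W j k * ξ k) * W j i * δ j) ∧
      (∀ i, v i = 0 →
        δ i = ∑ j ∈ Finset.univ.filter (fun j : Fin ν => ω ≤ (j : ℕ)),
              deriv σ (∑ k, W j k * ξ k) * W j i * δ j) ∧
      (∀ i, (∀ j, W j i = 0) → δ i = -v i)) := by
  intro T
  -- entry formula for T
  have hT : ∀ i j : Fin ν, T i j = (if j = i then (1:ℝ) else 0)
      - (if ω ≤ (j : ℕ) then deriv σ (∑ k, W j k * ξ k) * W j i else 0) := by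
    intro i j
    by_cases hj : (j : ℕ) < ω
    · have hfun : (fun ξ' : Fin ν → ℝ => G ν ω σ e τ ξ' W j)
          = fun ξ' => ξ' j - e τ ⟨(j : ℕ), hj⟩ := by
        funext ξ'; simp [G, hj]
      have hd : HasFDerivAt (fun ξ' : Fin ν → ℝ => ξ' j - e τ ⟨(j : ℕ), hj⟩)
          ((ContinuousLinearMap.proj j : (Fin ν → ℝ) →L[ℝ] ℝ)) ξ :=
        (hasFDerivAt_apply j ξ).sub_const (e τ ⟨(j : ℕ), hj⟩)
      show fderiv ℝ (fun ξ' => G ν ω σ e τ ξ' W j) ξ (Pi.single i 1) = _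
      rw [hfun, hd.fderiv]
      simp [Pi.single_apply, not_le.mpr hj]
    · have hj' : ω ≤ (j : ℕ) := not_lt.mp hj
      have hfun : (fun ξ' : Fin ν → ℝ => G ν ω σ e τ ξ' W j)
          = fun ξ' => ξ' j - σ (∑ k, W j k * ξ' k) := by
        funext ξ'; simp [G, hj]
      set L : (Fin ν → ℝ) →L[ℝ] ℝ := ∑ k, W j k • (ContinuousLinearMap.proj k : (Fin ν → ℝ) →L[ℝ] ℝ) with hL
      have hLapp : ∀ x : Fin ν → ℝ, L x = ∑ k, W j k * x k := by
        intro x; simp [hL, ContinuousLinearMap.sum_apply]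
      have hg : HasFDerivAt (fun ξ' : Fin ν → ℝ => ∑ k, W j k * ξ' k) L ξ := by
        rw [hL]
        exact HasFDerivAt.fun_sum fun k _ => ((hasFDerivAt_apply k ξ).const_mul (W j k))
      have hσd : HasDerivAt σ (deriv σ (∑ k, W j k * ξ k)) (∑ k, W j k * ξ k) :=
        ((hσ.differentiable two_ne_zero).differentiableAt).hasDerivAt
      have hcomp : HasFDerivAt (fun ξ' : Fin ν → ℝ => σ (∑ k, W j k * ξ' k))
          (deriv σ (∑ k, W j k * ξ k) • L) ξ := hσd.comp_hasFDerivAt ξ hg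
      have hd : HasFDerivAt (fun ξ' : Fin ν → ℝ => ξ' j - σ (∑ k, W j k * ξ' k))
          ((ContinuousLinearMap.proj j : (Fin ν → ℝ) →L[ℝ] ℝ) - deriv σ (∑ k, W j k * ξ k) • L) ξ :=
        (hasFDerivAt_apply j ξ).sub hcomp
      show fderiv ℝ (fun ξ' => G ν ω σ e τ ξ' W j) ξ (Pi.single i 1) = _
      rw [hfun, hd.fderiv]
      have : L (Pi.single i 1) = W j i := by
        rw [hLapp]
        simp [Pi.single_apply, mul_ite]
      simp [this, Pi.single_apply, hj']
  -- mulVec formula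
  have hmul : ∀ (δ : Fin ν → ℝ) (i : Fin ν), T.mulVec δ i = δ i
      - ∑ j ∈ Finset.univ.filter (fun j : Fin ν => ω ≤ (j : ℕ)),
          deriv σ (∑ k, W j k * ξ k) * W j i * δ j := by
    intro δ i
    have : T.mulVec δ i = ∑ j, T i j * δ j := rfl
    rw [this]
    have : ∀ j, T i j * δ j = (if j = i then δ j else 0)
        - (if ω ≤ (j : ℕ) then deriv σ (∑ k, W j k * ξ k) * W j i * δ j else 0) := by
      intro j; rw [hT]; split_ifs <;> ring
    rw [Finset.sum_congr rfl fun j _ => this j, Finset.sum_sub_distrib]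
    congr 1
    · simp
    · rw [← Finset.sum_filter]
  -- T is upper triangular with unit diagonal
  have hdiag : ∀ i, T i i = 1 := by
    intro i; rw [hT]; simp [hW i i le_rfl]
  have htri : T.BlockTriangular id := by
    intro i j (hij : j < i)
    rw [hT, hW j i hij.le]
    simp [Fin.ne_of_lt hij]
  have hdet : T.det = 1 := by
    rw [Matrix.det_of_upperTriangular htri]
    simp [hdiag]
  have : Invertible T := T.invertibleOfIsUnitDet (by rw [hdet]; exact isUnit_one)
  constructor
  · refine ⟨T⁻¹.mulVec (-v), ?_, ?_⟩
    · show T.mulVec (T⁻¹.mulVec (-v)) = -v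
      rw [Matrix.mulVec_mulVec, Matrix.mul_nonsing_inv _ (by rw [hdet]; exact isUnit_one),
        Matrix.one_mulVec]
    · intro y hy
      have := T.mulVec_injective_of_invertible
      apply this
      rw [hy, Matrix.mulVec_mulVec, Matrix.mul_nonsing_inv _ (by rw [hdet]; exact isUnit_one),
        Matrix.one_mulVec]
  · intro δ hδ
    have key : ∀ i, δ i = -v i
        + ∑ j ∈ Finset.univ.filter (fun j : Fin ν => ω ≤ (j : ℕ)),
            deriv σ (∑ k, W j k * ξ k) * W j i * δ j := by
      intro i
      have := congrFun hδ i
      rw [hmul] at this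
      have hv : (-v) i = -v i := rfl
      linarith [this, hv ▸ this]
    refine ⟨key, fun i hvi => by rw [key i, hvi]; ring, fun i hWi => ?_⟩
    rw [key i]
    have : ∀ j ∈ Finset.univ.filter (fun j : Fin ν => ω ≤ (j : ℕ)),
        deriv σ (∑ k, W j k * ξ k) * W j i * δ j = 0 := by
      intro j _; rw [hWi j]; ring
    rw [Finset.sum_eq_zero this]; ring
end

section
/- Let ν, ω, σ, e and the constraint functions G^j be as defined in the context. Fix τ ∈ [0,∞) and let V : ℝ^ν → ℝ be of class C¹. For a strictly lower triangular ν×ν real matrix W, let x(W) ∈ ℝ^ν denote the unique forward solution, i.e., x(W)^j = e^j(τ) for j < ω and x(W)^j = σ(Σ_{k<j} w_{jk} x(W)^k) for ω ≤ j < ν, and define the loss F(W) := V(x(W)). Let T be the ν×ν matrix with T_{ij} := ∂G^j/∂ξ^i (τ, x(W), W), and let δ ∈ ℝ^ν be the unique solution of T δ = −∇V(x(W)). Then for every pair (i,j) with ω ≤ i < ν and j < i, the partial derivative of F with respect to the weight w_{ij} satisfies ∂F/∂w_{ij}(W) = −σ'(Σ_k w_{ik} x(W)^k) · δ_i · x(W)^j;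 that is, the Lagrange-multiplier vector δ coincides with the delta error of the Backpropagation algorithm and the update Ẇ_{ij} = −(1/γ) σ'(w_{ik} x^k) δ_i x^j is gradient descent on F with rate 1/γ. -/
/-- let `x(W')` be the forward solution of the network
(`x^j = e^j(τ)` for `j < ω`, `x^j = σ(Σ_{k<j} w'_{jk} x^k)` otherwise),
`F(W') := V(x(W'))`, `T_{ij} := ∂G^j/∂ξ^i (τ, x(W), W)` and let `δ` solve
`T δ = −∇V(x(W))`. Then for every weight `w_{ij}` (with `ω ≤ i` and `j < i`)
`∂F/∂w_{ij}(W) = −σ'(Σ_k w_{ik} x(W)^k) · δ_i · x(W)^j`: the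
Lagrange-multiplier vector `δ` is the delta error of Backpropagation, and
`Ẇ_{ij} = −(1/γ) σ'(w_{ik}x^k) δ_i x^j` is gradient descent on `F`. -/
theorem backprop_reduction
    (ν ω : ℕ) (hω : 0 < ω) (hων : ω ≤ ν)
    (σ : ℝ → ℝ) (hσ : ContDiff ℝ 2 σ)
    (e : ℝ → Fin ω → ℝ) (he : ContDiffOn ℝ 1 e (Set.Ici 0))
    (τ : ℝ) (hτ : 0 ≤ τ)
    (V : (Fin ν → ℝ) → ℝ) (hV : ContDiff ℝ 1 V)
    (x : (Fin ν → Fin ν → ℝ) → Fin ν → ℝ)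
    (hx : ∀ W' : Fin ν → Fin ν → ℝ,
      (∀ j : Fin ν, ∀ h : (j : ℕ) < ω, x W' j = e τ ⟨(j : ℕ), h⟩) ∧
      (∀ j : Fin ν, ω ≤ (j : ℕ) →
        x W' j = σ (∑ k ∈ Finset.univ.filter (fun k : Fin ν => k < j),
          W' j k * x W' k)))
    (W : Fin ν → Fin ν → ℝ) (hW : ∀ i j : Fin ν, i ≤ j → W i j = 0)
    (F : (Fin ν → Fin ν → ℝ) → ℝ) (hF : F = fun W' => V (x W'))
    (T : Matrix (Fin ν) (Fin ν) ℝ)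
    (hT : T = Matrix.of fun i j =>
      fderiv ℝ (fun ξ' => G ν ω σ e τ ξ' W j) (x W) (Pi.single i 1))
    (δ : Fin ν → ℝ)
    (hδ : T.mulVec δ = -(fun a => fderiv ℝ V (x W) (Pi.single a 1))) :
    ∀ i j : Fin ν, ω ≤ (i : ℕ) → j < i →
      fderiv ℝ F W (Pi.single i (Pi.single j 1))
        = -(deriv σ (∑ k, W i k * x W k) * δ i * x W j) := by
  have hσd : Differentiable ℝ σ := hσ.differentiable two_ne_zero
  have hVd : Differentiable ℝ V := hV.differentiable one_ne_zero
  -- Step 1: differentiability of each coordinate of the forward solution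
  have hdiff : ∀ a : Fin ν, Differentiable ℝ (fun W' => x W' a) := by
    have key : ∀ n : ℕ, ∀ a : Fin ν, (a : ℕ) < n → Differentiable ℝ (fun W' => x W' a) := by
      intro n
      induction n with
      | zero => intro a ha; omega
      | succ n IH =>
        intro a ha
        by_cases h : (a : ℕ) < ω
        · have : (fun W' => x W' a) = fun _ => e τ ⟨a, h⟩ := funext fun W' => (hx W').1 a h
          rw [this]; exact differentiable_const _
        · push_neg at h
          have heq : (fun W' : Fin ν → Fin ν → ℝ => x W' a)
              = fun W' => σ (∑ k ∈ Finset.univ.filter (fun k : Fin ν => k < a),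
                  W' a k * x W' k) := funext fun W' => (hx W').2 a h
          rw [heq]
          refine hσd.comp (Differentiable.fun_sum fun k hk => ?_)
          have hk' : k < a := (Finset.mem_filter.mp hk).2
          have h1 : Differentiable ℝ (fun W' : Fin ν → Fin ν → ℝ => W' a k) := by
            exact ((ContinuousLinearMap.proj k).comp
              (ContinuousLinearMap.proj a : (Fin ν → Fin ν → ℝ) →L[ℝ] (Fin ν → ℝ))).differentiable
          exact h1.mul (IH k (by omega))
    exact fun a => key ν a a.isLt
  -- expansion of a linear functional in the standard basis
  have hlin : ∀ (L : (Fin ν → ℝ) →L[ℝ] ℝ) (v : Fin ν → ℝ),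
      L v = ∑ a, v a * L (Pi.single a 1) := by
    intro L v
    have hbasis : ∀ a : Fin ν, (fun b => if a = b then (1:ℝ) else 0) = Pi.single a 1 := by
      intro a; funext b; rw [Pi.single_apply]; simp [eq_comm]
    conv_lhs => rw [pi_eq_sum_univ v]
    rw [map_sum]
    refine Finset.sum_congr rfl fun a _ => ?_
    rw [hbasis a, map_smul]; rfl
  -- filtered sums equal full sums (strict lower triangularity of W)
  have hst : ∀ (b : Fin ν) (v : Fin ν → ℝ),
      (∑ k ∈ Finset.univ.filter (fun k : Fin ν => k < b), W b k * v k)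
      = ∑ k, W b k * v k := by
    intro b v
    refine Finset.sum_filter_of_ne fun k _ hne => ?_
    by_contra hc
    exact hne (by rw [hW b k (le_of_not_gt hc), zero_mul])
  -- Step 2: explicit form of the matrix T
  have hTab : ∀ a b : Fin ν, T a b = (if b = a then (1:ℝ) else 0)
      - (if ω ≤ (b:ℕ) then deriv σ (∑ k, W b k * x W k) * W b a else 0) := by
    intro a b
    rw [hT]
    show fderiv ℝ (fun ξ' => G ν ω σ e τ ξ' W b) (x W) (Pi.single a 1) = _
    by_cases hb : (b:ℕ) < ω
    · have hGe : (fun ξ' : Fin ν → ℝ => G ν ω σ e τ ξ' W b)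
          = fun ξ' => ξ' b - e τ ⟨(b:ℕ), hb⟩ := by
        funext ξ'; simp only [G, dif_pos hb]
      rw [hGe]
      have hd : HasFDerivAt (fun ξ' : Fin ν → ℝ => ξ' b - e τ ⟨(b:ℕ), hb⟩)
          (ContinuousLinearMap.proj b : (Fin ν → ℝ) →L[ℝ] ℝ) (x W) :=
        ((ContinuousLinearMap.proj b : (Fin ν → ℝ) →L[ℝ] ℝ).hasFDerivAt).sub_const
          (e τ ⟨(b:ℕ), hb⟩)
      rw [hd.fderiv]
      simp [ContinuousLinearMap.proj_apply, Pi.single_apply, not_le.mpr hb]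
    · push_neg at hb
      have hGe : (fun ξ' : Fin ν → ℝ => G ν ω σ e τ ξ' W b)
          = fun ξ' => ξ' b - σ (∑ k, W b k * ξ' k) := by
        funext ξ'; simp only [G, dif_neg (not_lt.mpr hb)]
      rw [hGe]
      have hsum : HasFDerivAt (fun ξ' : Fin ν → ℝ => ∑ k, W b k * ξ' k)
          (∑ k, W b k • (ContinuousLinearMap.proj k : (Fin ν → ℝ) →L[ℝ] ℝ)) (x W) :=
        HasFDerivAt.fun_sum fun k _ =>
          ((ContinuousLinearMap.proj k : (Fin ν → ℝ) →L[ℝ] ℝ).hasFDerivAt).const_mul _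
      have hσ' : HasDerivAt σ (deriv σ (∑ k, W b k * x W k)) (∑ k, W b k * x W k) :=
        (hσd _).hasDerivAt
      have hd : HasFDerivAt (fun ξ' : Fin ν → ℝ => ξ' b - σ (∑ k, W b k * ξ' k))
          ((ContinuousLinearMap.proj b : (Fin ν → ℝ) →L[ℝ] ℝ) - deriv σ (∑ k, W b k * x W k) •
            (∑ k, W b k • (ContinuousLinearMap.proj k : (Fin ν → ℝ) →L[ℝ] ℝ))) (x W) :=
        ((ContinuousLinearMap.proj b : (Fin ν → ℝ) →L[ℝ] ℝ).hasFDerivAt).sub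
          (hσ'.comp_hasFDerivAt (x W) hsum)
      rw [hd.fderiv]
      have heval : (∑ k, W b k • (ContinuousLinearMap.proj k : (Fin ν → ℝ) →L[ℝ] ℝ))
          (Pi.single a 1) = W b a := by
        simp [ContinuousLinearMap.sum_apply, ContinuousLinearMap.smul_apply,
          ContinuousLinearMap.proj_apply, Pi.single_apply, mul_ite,
          Finset.sum_ite_eq']
      simp only [ContinuousLinearMap.sub_apply, ContinuousLinearMap.smul_apply, heval,
        ContinuousLinearMap.proj_apply, Pi.single_apply, hb, if_true, smul_eq_mul]
  -- the δ-equation, coordinatewise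
  have hδ' : ∀ a : Fin ν, (fderiv ℝ V (x W) (Pi.single a 1) : ℝ)
      = (∑ b : Fin ν, (if ω ≤ ((b:Fin ν):ℕ) then deriv σ (∑ k, W b k * x W k) * W b a else 0) * δ b)
        - δ a := by
    intro a
    have h1 := congrFun hδ a
    simp only [Matrix.mulVec, dotProduct, Pi.neg_apply] at h1
    have h2 : ∑ b, T a b * δ b
        = δ a - ∑ b : Fin ν, (if ω ≤ ((b:Fin ν):ℕ) then deriv σ (∑ k, W b k * x W k) * W b a else 0) * δ b := by
      simp only [hTab, sub_mul, ite_mul, one_mul, zero_mul]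
      rw [Finset.sum_sub_distrib, Finset.sum_ite_eq' Finset.univ a δ]
      simp
    rw [h2] at h1
    linarith
  intro i j hij hji
  set E : Fin ν → Fin ν → ℝ := Pi.single i (Pi.single j 1) with hE
  obtain ⟨U, hU⟩ : ∃ U : Fin ν → ℝ,
      U = fun a => fderiv ℝ (fun W' => x W' a) W E := ⟨_, rfl⟩
  have hu0 : ∀ a : Fin ν, (a:ℕ) < ω → U a = 0 := by
    intro a ha
    have hconst : (fun W' : Fin ν → Fin ν → ℝ => x W' a) = fun _ => e τ ⟨a, ha⟩ :=
      funext fun W' => (hx W').1 a ha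
    rw [hU]; simp [hconst]
  -- the recursion satisfied by U
  have hurec : ∀ a : Fin ν, ω ≤ (a:ℕ) →
      U a = deriv σ (∑ k, W a k * x W k)
        * ((∑ k ∈ Finset.univ.filter (fun k : Fin ν => k < a), W a k * U k)
            + (if a = i then x W j else 0)) := by
    intro a ha
    have heq : (fun W' : Fin ν → Fin ν → ℝ => x W' a)
        = fun W' => σ (∑ k ∈ Finset.univ.filter (fun k : Fin ν => k < a),
            W' a k * x W' k) := funext fun W' => (hx W').2 a ha
    have hsum : HasFDerivAt (fun W' : Fin ν → Fin ν → ℝ =>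
        ∑ k ∈ Finset.univ.filter (fun k : Fin ν => k < a), W' a k * x W' k)
        (∑ k ∈ Finset.univ.filter (fun k : Fin ν => k < a),
          (W a k • fderiv ℝ (fun W' => x W' k) W
            + x W k • ((ContinuousLinearMap.proj k).comp
                (ContinuousLinearMap.proj a : (Fin ν → Fin ν → ℝ) →L[ℝ] (Fin ν → ℝ))))) W := by
      refine HasFDerivAt.fun_sum fun k _ => ?_
      have h1 : HasFDerivAt (fun W' : Fin ν → Fin ν → ℝ => W' a k)
          ((ContinuousLinearMap.proj k).comp
            (ContinuousLinearMap.proj a : (Fin ν → Fin ν → ℝ) →L[ℝ] (Fin ν → ℝ))) W :=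
        ((ContinuousLinearMap.proj k).comp
          (ContinuousLinearMap.proj a : (Fin ν → Fin ν → ℝ) →L[ℝ] (Fin ν → ℝ))).hasFDerivAt
      have h2 : HasFDerivAt (fun W' => x W' k) (fderiv ℝ (fun W' => x W' k) W) W :=
        ((hdiff k) W).hasFDerivAt
      exact h1.mul h2
    have hσ2 : HasDerivAt σ
        (deriv σ (∑ k ∈ Finset.univ.filter (fun k : Fin ν => k < a), W a k * x W k))
        (∑ k ∈ Finset.univ.filter (fun k : Fin ν => k < a), W a k * x W k) :=
      (hσd _).hasDerivAt
    have hd := hσ2.comp_hasFDerivAt W hsum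
    have hfd : fderiv ℝ (fun W' : Fin ν → Fin ν → ℝ => x W' a) W
        = deriv σ (∑ k ∈ Finset.univ.filter (fun k : Fin ν => k < a), W a k * x W k)
          • (∑ k ∈ Finset.univ.filter (fun k : Fin ν => k < a),
            (W a k • fderiv ℝ (fun W' => x W' k) W
              + x W k • ((ContinuousLinearMap.proj k).comp
                  (ContinuousLinearMap.proj a : (Fin ν → Fin ν → ℝ) →L[ℝ] (Fin ν → ℝ))))) := by
      rw [heq]; exact hd.fderiv
    have hEa : (∑ k ∈ Finset.univ.filter (fun k : Fin ν => k < a), x W k * E a k)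
        = if a = i then x W j else 0 := by
      by_cases hai : a = i
      · subst hai
        have hEi : E a = Pi.single j 1 := by rw [hE]; simp
        rw [if_pos rfl]
        simp only [hEi, Pi.single_apply, mul_ite, mul_one, mul_zero]
        rw [Finset.sum_ite_eq' (Finset.univ.filter (fun k : Fin ν => k < a)) j (x W)]
        simp [hji]
      · have hEa0 : E a = 0 := Pi.single_eq_of_ne hai _
        simp [hEa0, hai]
    rw [hU]
    simp only []
    rw [hfd, hst a (x W)]
    rw [ContinuousLinearMap.smul_apply, ContinuousLinearMap.sum_apply]
    simp only [ContinuousLinearMap.add_apply, ContinuousLinearMap.smul_apply, smul_eq_mul,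
      ContinuousLinearMap.coe_comp', Function.comp_apply, ContinuousLinearMap.proj_apply]
    rw [Finset.sum_add_distrib, hEa]
  -- derivative of F in the direction E
  have hxAt : DifferentiableAt ℝ x W :=
    differentiableAt_pi.mpr fun a => (hdiff a).differentiableAt
  have hcomp : fderiv ℝ F W = (fderiv ℝ V (x W)).comp (fderiv ℝ x W) := by
    rw [hF]; exact fderiv_comp W (hVd (x W)) hxAt
  have hxfd : fderiv ℝ x W = ContinuousLinearMap.pi (fun a => fderiv ℝ (fun W' => x W' a) W) :=
    fderiv_pi fun a => (hdiff a).differentiableAt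
  have hmain : fderiv ℝ F W E = ∑ a, U a * fderiv ℝ V (x W) (Pi.single a 1) := by
    rw [hcomp, ContinuousLinearMap.comp_apply, hxfd]
    have hpe : (ContinuousLinearMap.pi fun a => fderiv ℝ (fun W' => x W' a) W) E = U := by
      funext a; rw [ContinuousLinearMap.pi_apply, hU]
    rw [hpe, hlin]
  -- key summation identity
  have hkey : ∀ b : Fin ν,
      (∑ a, (if ω ≤ (b:ℕ) then deriv σ (∑ k, W b k * x W k) * W b a else 0) * U a)
      = U b - (if b = i then deriv σ (∑ k, W i k * x W k) * x W j else 0) := by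
    intro b
    by_cases hb : ω ≤ (b:ℕ)
    · simp only [if_pos hb]
      have h1 : ∑ a, deriv σ (∑ k, W b k * x W k) * W b a * U a
          = deriv σ (∑ k, W b k * x W k) * ∑ a, W b a * U a := by
        rw [Finset.mul_sum]; exact Finset.sum_congr rfl fun a _ => by ring
      rw [h1, ← hst b U, hurec b hb]
      by_cases hbi : b = i
      · rw [if_pos hbi, if_pos hbi, hbi]; ring
      · rw [if_neg hbi, if_neg hbi]; ring
    · have hb' : (b:ℕ) < ω := not_le.mp hb
      have hbne : b ≠ i := by intro h; subst h; omega
      simp [hb, hu0 b hb', hbne]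
  -- pure algebra lemma
  have habs : ∀ (D : Fin ν → Fin ν → ℝ) (UU dd : Fin ν → ℝ),
      (∑ a, UU a * ((∑ b : Fin ν, D a b * dd b) - dd a))
      = (∑ b : Fin ν, dd b * (∑ a, D a b * UU a)) - ∑ a, UU a * dd a := by
    intro D UU dd
    simp only [mul_sub]
    rw [Finset.sum_sub_distrib]
    congr 1
    calc (∑ a, UU a * ∑ b : Fin ν, D a b * dd b)
        = ∑ a, ∑ b : Fin ν, UU a * (D a b * dd b) :=
          Finset.sum_congr rfl fun a _ => Finset.mul_sum _ _ _
      _ = ∑ b : Fin ν, ∑ a, UU a * (D a b * dd b) := Finset.sum_comm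
      _ = ∑ b : Fin ν, dd b * ∑ a, D a b * UU a := by
          refine Finset.sum_congr rfl fun b _ => ?_
          rw [Finset.mul_sum]
          exact Finset.sum_congr rfl fun a _ => by ring
  -- assemble
  rw [hmain]
  have e1 : (∑ a, U a * (fderiv ℝ V (x W) (Pi.single a 1) : ℝ))
      = ∑ a, U a * ((∑ b : Fin ν,
          (if ω ≤ (b:ℕ) then deriv σ (∑ k, W b k * x W k) * W b a else 0) * δ b) - δ a) :=
    Finset.sum_congr rfl fun a _ => by rw [hδ' a]
  rw [e1, habs (fun a b => if ω ≤ (b:ℕ) then deriv σ (∑ k, W b k * x W k) * W b a else 0) U δ]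
  have e2 : (∑ b : Fin ν, δ b * (∑ a,
      (if ω ≤ (b:ℕ) then deriv σ (∑ k, W b k * x W k) * W b a else 0) * U a))
      = ∑ b : Fin ν, δ b * (U b - (if b = i then deriv σ (∑ k, W i k * x W k) * x W j else 0)) :=
    Finset.sum_congr rfl fun b _ => by rw [hkey b]
  rw [e2]
  simp only [mul_sub, Finset.sum_sub_distrib, mul_ite, mul_zero]
  rw [Finset.sum_ite_eq' Finset.univ i
    (fun b => δ b * (deriv σ (∑ k, W i k * x W k) * x W j))]
  have e3 : (∑ b : Fin ν, δ b * U b) = ∑ a, U a * δ a :=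
    Finset.sum_congr rfl fun a _ => by ring
  rw [e3]
  simp only [Finset.mem_univ, if_true]
  ring
end
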